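/- Fix ε > 0 and z̃ ∈ ℝ, and set y* = −ε/(2 − (3/2)ε + 2ε²). Suppose y and y' are related by the reduced two-step update y' = y − 2(4 − 3ε + 4ε²) y z̃² − 4ε z̃², and write y = −(1 + δ) ε/(2 − (3/2)ε + 2ε²) and y' = −(1 + δ') ε/(2 − (3/2)ε + 2ε²). Then δ' = (1 − 2(4 − 3ε + 4ε²) z̃²) δ. In particular y* is a fixed point of the y-update for every z̃, and if 0 < 2(4 − 3ε + 4ε²) z̃² < 1 the deviation δ from y* is strictly contracted. -/

import Mathlib

/-- For the reduced two-step `y`-update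
`y' = y − 2(4 − 3ε + 4ε²) y z̃² − 4ε z̃²`, writing
`y = −(1 + δ) ε/(2 − (3/2)ε + 2ε²)` and `y' = −(1 + δ') ε/(2 − (3/2)ε + 2ε²)`,
one has `δ' = (1 − 2(4 − 3ε + 4ε²) z̃²) δ`.  In particular
`y* = −ε/(2 − (3/2)ε + 2ε²)` is a fixed point, and when
`0 < 2(4 − 3ε + 4ε²) z̃² < 1` and `δ ≠ 0` the deviation is strictly contracted. -/
theorem stmt10 (ε : ℝ) (hε : 0 < ε) (z : ℝ) (ystar : ℝ)
    (hys : ystar = -ε / (2 - (3 / 2) * ε + 2 * ε ^ 2))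
    (y y' δ δ' : ℝ)
    (hy' : y' = y - 2 * (4 - 3 * ε + 4 * ε ^ 2) * y * z ^ 2 - 4 * ε * z ^ 2)
    (hδ : y = -(1 + δ) * (ε / (2 - (3 / 2) * ε + 2 * ε ^ 2)))
    (hδ' : y' = -(1 + δ') * (ε / (2 - (3 / 2) * ε + 2 * ε ^ 2))) :
    δ' = (1 - 2 * (4 - 3 * ε + 4 * ε ^ 2) * z ^ 2) * δ ∧
      (y = ystar → y' = ystar) ∧
      (0 < 2 * (4 - 3 * ε + 4 * ε ^ 2) * z ^ 2 →
        2 * (4 - 3 * ε + 4 * ε ^ 2) * z ^ 2 < 1 → δ ≠ 0 → |δ'| < |δ|) := by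
  have hDpos : (0:ℝ) < 2 - (3 / 2) * ε + 2 * ε ^ 2 := by nlinarith [sq_nonneg (ε - 3/8)]
  have hD : (2 - (3 / 2) * ε + 2 * ε ^ 2) ≠ 0 := ne_of_gt hDpos
  have hεne : ε ≠ 0 := ne_of_gt hε
  have hD2 : (2 * 2 - 3 * ε + 2 * ε ^ 2 * 2 : ℝ) ≠ 0 := by nlinarith [sq_nonneg (ε - 3/8)]
  have hkey : δ' = (1 - 2 * (4 - 3 * ε + 4 * ε ^ 2) * z ^ 2) * δ := by
    subst hy'
    rw [hδ] at hδ'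
    have hcD : (2 - (3 / 2) * ε + 2 * ε ^ 2) * (ε / (2 - (3 / 2) * ε + 2 * ε ^ 2)) = ε :=
      mul_div_cancel₀ ε hD
    have hc : ε / (2 - (3 / 2) * ε + 2 * ε ^ 2) ≠ 0 := div_ne_zero hεne hD
    have hprod : (δ' - (1 - 2 * (4 - 3 * ε + 4 * ε ^ 2) * z ^ 2) * δ)
        * (ε / (2 - (3 / 2) * ε + 2 * ε ^ 2)) = 0 := by
      linear_combination hδ' - 4 * z ^ 2 * hcD
    rcases mul_eq_zero.mp hprod with h | h
    · linarith
    · exact absurd h hc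
  refine ⟨hkey, ?_, ?_⟩
  · intro hystar
    have hδ0 : δ = 0 := by
      rw [hys] at hystar
      rw [hystar] at hδ
      field_simp [hD2] at hδ
      have : δ * ε = 0 := by
        have hE : (2 ^ 2 - ε * 3 + ε ^ 2 * 2 ^ 2 : ℝ) ≠ 0 := by nlinarith [sq_nonneg (ε - 3/8)]
        rw [neg_inj, div_left_inj' hE] at hδ
        have hδz : δ = 0 := by linarith
        rw [hδz, zero_mul]
      rcases mul_eq_zero.mp this with h | h
      · exact h
      · exact absurd h hεne
    rw [hδ', hkey, hδ0, hys]
    ring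
  · intro h1 h2 hne
    rw [hkey, abs_mul]
    have : |1 - 2 * (4 - 3 * ε + 4 * ε ^ 2) * z ^ 2| < 1 := by
      rw [abs_lt]; constructor <;> linarith
    calc |1 - 2 * (4 - 3 * ε + 4 * ε ^ 2) * z ^ 2| * |δ| < 1 * |δ| := by
          exact mul_lt_mul_of_pos_right this (abs_pos.mpr hne)
      _ = |δ| := one_mul _
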